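/- For every N ≥ 1, β > 0 and J > 0, the Curie–Weiss pressure satisfies the upper bound (1/N) ln Z_N(β) ≤ ln(2N+1)/N + sup_{m̃ ∈ [-1,1]} { ln 2 + ln cosh(βJ m̃) − (βJ/2) m̃² }. -/

import Mathlib

open Real

/-- The value of a spin: `true ↦ 1`, `false ↦ -1`. -/
noncomputable def spin (b : Bool) : ℝ := if b then 1 else -1

/-- The magnetization per spin of a configuration `σ ∈ {-1,1}^N`. -/
noncomputable def mag (N : ℕ) (σ : Fin N → Bool) : ℝ := (1 / (N : ℝ)) * ∑ i, spin (σ i)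

/-- The Curie–Weiss partition function `Z_N(β) = ∑_σ exp((βJN/2) m(σ)²)`. -/
noncomputable def Zcw (N : ℕ) (J β : ℝ) : ℝ :=
  ∑ σ : Fin N → Bool, Real.exp (β * J * (N : ℝ) / 2 * (mag N σ) ^ 2)

/-- For every `N ≥ 1`, `β > 0` and `J > 0`, the Curie–Weiss pressure satisfies
`(1/N) ln Z_N(β) ≤ ln(2N+1)/N + sup_{m̃ ∈ [-1,1]} { ln 2 + ln cosh(βJ m̃) − (βJ/2) m̃² }`. -/
theorem cw_upper_bound (N : ℕ) (hN : 1 ≤ N) (β J : ℝ) (hβ : 0 < β) (hJ : 0 < J) :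
    (1 / (N : ℝ)) * Real.log (Zcw N J β) ≤
      Real.log (2 * (N : ℝ) + 1) / (N : ℝ) +
        sSup ((fun mt : ℝ =>
          Real.log 2 + Real.log (Real.cosh (β * J * mt)) - β * J / 2 * mt ^ 2) ''
            Set.Icc (-1 : ℝ) 1) := by
  set f : ℝ → ℝ := fun mt =>
    Real.log 2 + Real.log (Real.cosh (β * J * mt)) - β * J / 2 * mt ^ 2 with hf_def
  set S := sSup (f '' Set.Icc (-1 : ℝ) 1) with hS_def
  have hNpos : (0 : ℝ) < N := by exact_mod_cast hN
  have hfc : Continuous f := by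
    apply Continuous.sub
    · exact continuous_const.add
        ((Real.continuous_cosh.comp (continuous_const.mul continuous_id)).log
          (fun x => (Real.cosh_pos _).ne'))
    · continuity
  have hbdd : BddAbove (f '' Set.Icc (-1 : ℝ) 1) :=
    (isCompact_Icc.image hfc).bddAbove
  have hfle : ∀ m ∈ Set.Icc (-1 : ℝ) 1, f m ≤ S := fun m hm => le_csSup hbdd ⟨m, hm, rfl⟩
  -- count of up-spins
  set cnt : (Fin N → Bool) → ℕ := fun σ => ∑ i, if σ i then 1 else 0 with hcnt_def
  have hcnt_le : ∀ σ, cnt σ ≤ N := by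
    intro σ
    calc cnt σ ≤ ∑ _i : Fin N, 1 := Finset.sum_le_sum (fun i _ => by split <;> simp)
      _ = N := by simp
  have hspin_sum : ∀ σ : Fin N → Bool, ∑ i, spin (σ i) = 2 * (cnt σ : ℝ) - N := by
    intro σ
    have h1 : ∀ i : Fin N, spin (σ i) = 2 * (if σ i then (1 : ℝ) else 0) - 1 := by
      intro i; cases σ i <;> norm_num [spin]
    rw [Finset.sum_congr rfl (fun i _ => h1 i)]
    rw [Finset.sum_sub_distrib, ← Finset.mul_sum]
    have h2 : ((cnt σ : ℕ) : ℝ) = ∑ i, if σ i then (1 : ℝ) else 0 := by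
      rw [hcnt_def]
      push_cast [apply_ite (Nat.cast : ℕ → ℝ)]
      rfl
    rw [← h2]; simp
  set mk : ℕ → ℝ := fun k => (2 * k - N) / N with hmk_def
  have hmag : ∀ σ, mag N σ = mk (cnt σ) := by
    intro σ
    simp only [mag, hspin_sum σ, hmk_def]
    field_simp
  have hmk_mem : ∀ k, k ≤ N → mk k ∈ Set.Icc (-1 : ℝ) 1 := by
    intro k hk
    have hk' : (k : ℝ) ≤ N := by exact_mod_cast hk
    have hk0 : (0 : ℝ) ≤ (k : ℝ) := Nat.cast_nonneg k
    constructor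
    · rw [hmk_def, le_div_iff₀ hNpos]; nlinarith
    · rw [hmk_def, div_le_iff₀ hNpos]; nlinarith
  have key : Zcw N J β ≤ ((N : ℝ) + 1) * Real.exp (N * S) := by
    rw [Zcw,
      ← Finset.sum_fiberwise_of_maps_to (g := cnt) (t := Finset.range (N + 1))
        (fun σ _ => Finset.mem_range.mpr (Nat.lt_succ_of_le (hcnt_le σ)))
        (fun σ => Real.exp (β * J * (N : ℝ) / 2 * (mag N σ) ^ 2))]
    calc ∑ k ∈ Finset.range (N + 1), ∑ σ ∈ Finset.univ.filter (fun σ => cnt σ = k),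
            Real.exp (β * J * (N : ℝ) / 2 * (mag N σ) ^ 2)
        ≤ ∑ _k ∈ Finset.range (N + 1), Real.exp (N * S) := by
          apply Finset.sum_le_sum
          intro k hk
          have hkN : k ≤ N := Nat.lt_succ_iff.mp (Finset.mem_range.mp hk)
          set x := β * J * mk k with hx_def
          set c := β * J * (N : ℝ) / 2 * (mk k) ^ 2 with hc_def
          have hNmk : (N : ℝ) * mk k = 2 * k - N := by
            rw [hmk_def]; field_simp
          have h2c : (0 : ℝ) < 2 * Real.cosh x := by positivity
          calc ∑ σ ∈ Finset.univ.filter (fun σ => cnt σ = k),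
                  Real.exp (β * J * (N : ℝ) / 2 * (mag N σ) ^ 2)
              = ∑ σ ∈ Finset.univ.filter (fun σ => cnt σ = k),
                  Real.exp (-c) * Real.exp (x * ∑ i, spin (σ i)) := by
                apply Finset.sum_congr rfl
                intro σ hσ
                have hσk : cnt σ = k := (Finset.mem_filter.mp hσ).2
                have hsp : ∑ i, spin (σ i) = (N : ℝ) * mk k := by
                  rw [hspin_sum σ, hσk, hNmk]
                rw [hmag σ, hσk, ← Real.exp_add, hsp]
                congr 1
                rw [hc_def]; ring
            _ ≤ ∑ σ : Fin N → Bool, Real.exp (-c) * Real.exp (x * ∑ i, spin (σ i)) :=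
                Finset.sum_le_sum_of_subset_of_nonneg (Finset.filter_subset _ _)
                  (fun _ _ _ => by positivity)
            _ = Real.exp (-c) * ∑ σ : Fin N → Bool, ∏ i, Real.exp (x * spin (σ i)) := by
                rw [← Finset.mul_sum]
                congr 1
                apply Finset.sum_congr rfl
                intro σ _
                rw [← Real.exp_sum, Finset.mul_sum]
            _ = Real.exp (-c) * (∑ b : Bool, Real.exp (x * spin b)) ^ N := by
                congr 1
                exact (Fintype.sum_pow (fun b => Real.exp (x * spin b)) N).symm
            _ = Real.exp (-c) * (2 * Real.cosh x) ^ N := by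
                congr 2
                rw [Real.cosh_eq]
                simp [spin]
                ring
            _ = Real.exp ((N : ℝ) * f (mk k)) := by
                have hfval : f (mk k) =
                    Real.log 2 + Real.log (Real.cosh x) - β * J / 2 * (mk k) ^ 2 := rfl
                have heq : (N : ℝ) * f (mk k) = (N : ℝ) * Real.log (2 * Real.cosh x) + -c := by
                  rw [hfval, ← Real.log_mul (two_ne_zero) (Real.cosh_pos x).ne', hc_def]
                  ring
                rw [heq, Real.exp_add, Real.exp_nat_mul, Real.exp_log h2c, mul_comm]
            _ ≤ Real.exp ((N : ℝ) * S) :=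
                Real.exp_le_exp.mpr
                  (mul_le_mul_of_nonneg_left (hfle _ (hmk_mem k hkN)) (Nat.cast_nonneg N))
      _ = ((N : ℝ) + 1) * Real.exp (N * S) := by
          rw [Finset.sum_const, Finset.card_range, nsmul_eq_mul]
          push_cast
          ring
  have hZpos : 0 < Zcw N J β := by
    rw [Zcw]
    exact Finset.sum_pos (fun σ _ => Real.exp_pos _) ⟨fun _ => true, Finset.mem_univ _⟩
  have key2 : Zcw N J β ≤ (2 * (N : ℝ) + 1) * Real.exp (N * S) := by
    refine key.trans (mul_le_mul_of_nonneg_right ?_ (Real.exp_pos _).le)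
    linarith
  have hlog : Real.log (Zcw N J β) ≤ Real.log (2 * (N : ℝ) + 1) + (N : ℝ) * S := by
    calc Real.log (Zcw N J β) ≤ Real.log ((2 * (N : ℝ) + 1) * Real.exp (N * S)) :=
          Real.log_le_log hZpos key2
      _ = Real.log (2 * (N : ℝ) + 1) + (N : ℝ) * S := by
          rw [Real.log_mul (by positivity) (Real.exp_ne_zero _), Real.log_exp]
  have h3 := mul_le_mul_of_nonneg_left hlog (by positivity : (0 : ℝ) ≤ 1 / N)
  calc (1 / (N : ℝ)) * Real.log (Zcw N J β)
      ≤ (1 / (N : ℝ)) * (Real.log (2 * (N : ℝ) + 1) + (N : ℝ) * S) := h3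
    _ = Real.log (2 * (N : ℝ) + 1) / (N : ℝ) + S := by
        field_simp
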